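/- Assume #V ≥ 2 and set κ_λ := min_{x≠y} κ_λ(x,y) for λ > 0. Then for every f ∈ Lip_w^1(V), every natural number n, and all x, y ∈ V, the n-fold iterate of the resolvent satisfies ⟨J_λ^n f, δ_x − δ_y⟩ ≤ (1 − κ_λ)^n · d(x,y). (This is the discrete gradient estimate underlying the heat-flow gradient estimate ⟨h_t f, δ_x − δ_y⟩ ≤ e^{−κ̄₀ t} d(x,y).) -/

import Mathlib

set_option linter.unusedSectionVars false
set_option linter.unusedVariables false
set_option maxHeartbeats 1000000


open scoped BigOperators

noncomputable section

namespace HypRicci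

variable {V : Type*} [Fintype V] [DecidableEq V]

/-- A finite weighted hypergraph on vertex set `V`: a finite set of nonempty
hyperedges together with positive weights. -/
structure Hypergraph (V : Type*) [Fintype V] [DecidableEq V] : Type _ where
  E : Finset (Finset V)
  w : Finset V → ℝ
  w_pos : ∀ e ∈ E, 0 < w e
  e_nonempty : ∀ e ∈ E, e.Nonempty

/-- Degree `d_x = ∑_{e ∋ x} w(e)`. -/
def deg (H : Hypergraph V) (x : V) : ℝ := ∑ e ∈ H.E, if x ∈ e then H.w e else 0

/-- Volume `vol(V) = ∑_x d_x`. -/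
def vol (H : Hypergraph V) : ℝ := ∑ x, deg H x

/-- Weighted inner product `⟨f,g⟩ = ∑_x f(x) g(x) / d_x`. -/
def inn (H : Hypergraph V) (f g : V → ℝ) : ℝ := ∑ x, f x * g x / deg H x

/-- Norm associated to `inn`. -/
def nrm (H : Hypergraph V) (f : V → ℝ) : ℝ := Real.sqrt (inn H f f)

/-- Indicator function `δ_x`. -/
def delta (x : V) : V → ℝ := fun z => if z = x then 1 else 0

/-- Standard (unweighted) dot product `u^⊤ v`. -/
def dot (u v : V → ℝ) : ℝ := ∑ x, u x * v x

/-- Base polytope `B_e = conv{δ_x − δ_y : x,y ∈ e}`. -/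
def Bp (e : Finset V) : Set (V → ℝ) :=
  convexHull ℝ {b : V → ℝ | ∃ x ∈ e, ∃ y ∈ e, b = delta x - delta y}

/-- The multivalued hypergraph Laplacian
`L(f) = {∑_e w(e) (b_e^⊤ f) b_e : b_e ∈ argmax_{b ∈ B_e} b^⊤ f}`. -/
def Lap (H : Hypergraph V) (f : V → ℝ) : Set (V → ℝ) :=
  { g | ∃ b : Finset V → (V → ℝ),
      (∀ e ∈ H.E, b e ∈ Bp e ∧ ∀ b' ∈ Bp e, dot b' f ≤ dot (b e) f) ∧
      g = ∑ e ∈ H.E, (H.w e * dot (b e) f) • b e }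

/-- `D⁻¹ f`. -/
def Dinv (H : Hypergraph V) (f : V → ℝ) : V → ℝ := fun x => f x / deg H x

/-- Normalized Laplacian `𝓛(f) = L(D⁻¹ f)`. -/
def NL (H : Hypergraph V) (f : V → ℝ) : Set (V → ℝ) := Lap H (Dinv H f)

/-- The resolvent `J_λ = (I + λ𝓛)⁻¹`: it sends `f` to the (unique) `g` with
`f ∈ g + λ 𝓛(g)`. -/
def Resolvent (H : Hypergraph V) (l : ℝ) (f : V → ℝ) : V → ℝ :=
  Classical.epsilon fun g => ∃ h ∈ NL H g, f = g + l • h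

/-- Adjacency: `x ∼ y` iff some hyperedge contains both. -/
def Adj (H : Hypergraph V) (x y : V) : Prop := ∃ e ∈ H.E, x ∈ e ∧ y ∈ e

/-- There is a chain of length `n` of successively adjacent vertices from `x` to `y`. -/
def chainProp (H : Hypergraph V) (x y : V) (n : ℕ) : Prop :=
  ∃ z : ℕ → V, z 0 = x ∧ z n = y ∧ ∀ i < n, Adj H (z i) (z (i + 1))

/-- Connectedness of the hypergraph. -/
def Connected (H : Hypergraph V) : Prop := ∀ x y : V, ∃ n, chainProp H x y n

/-- Graph distance (as a natural number). -/
def hdistN (H : Hypergraph V) (x y : V) : ℕ := sInf {n | chainProp H x y n}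

/-- Graph distance `d(x,y)` as a real number. -/
def gdist (H : Hypergraph V) (x y : V) : ℝ := (hdistN H x y : ℝ)

/-- Diameter `diam(H) = max_{x,y} d(x,y)`. -/
def hdiam (H : Hypergraph V) : ℝ :=
  (((Finset.univ : Finset (V × V)).sup fun p => hdistN H p.1 p.2 : ℕ) : ℝ)

/-- Weighted `1`-Lipschitz functions: `⟨f, δ_x − δ_y⟩ ≤ d(x,y)` for all `x, y`. -/
def Lip1 (H : Hypergraph V) : Set (V → ℝ) :=
  { f | ∀ x y : V, inn H f (delta x - delta y) ≤ gdist H x y }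

/-- The `λ`-nonlinear Kantorovich difference. -/
def KD (H : Hypergraph V) (l : ℝ) (x y : V) : ℝ :=
  sSup { r | ∃ f ∈ Lip1 H, r = inn H (Resolvent H l f) (delta x - delta y) }

/-- `κ_λ(x,y) = 1 − KD_λ(x,y)/d(x,y)`. -/
def kappa (H : Hypergraph V) (l : ℝ) (x y : V) : ℝ := 1 - KD H l x y / gdist H x y

/-- Lower coarse Ricci curvature `κ̲(x,y) = liminf_{λ↓0} κ_λ(x,y)/λ`. -/
def kappaLower (H : Hypergraph V) (x y : V) : EReal :=
  Filter.liminf (fun l : ℝ => ((kappa H l x y / l : ℝ) : EReal)) (nhdsWithin 0 (Set.Ioi 0))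

/-- Upper coarse Ricci curvature `κ̄(x,y) = limsup_{λ↓0} κ_λ(x,y)/λ`. -/
def kappaUpper (H : Hypergraph V) (x y : V) : EReal :=
  Filter.limsup (fun l : ℝ => ((kappa H l x y / l : ℝ) : EReal)) (nhdsWithin 0 (Set.Ioi 0))

/-- Canonical restriction `𝓛⁰ f`: the unique element of minimal norm of `𝓛(f)`. -/
def L0 (H : Hypergraph V) (f : V → ℝ) : V → ℝ :=
  Classical.epsilon fun g => g ∈ NL H f ∧ ∀ h ∈ NL H f, nrm H g ≤ nrm H h

/-- The stationary distribution `π(x) = d_x / vol(V)`. -/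
def piH (H : Hypergraph V) : V → ℝ := fun x => deg H x / vol H

/-- The energy `Q(h) = (1/2) ∑_e w(e) max_{x,y ∈ e} (h(x) − h(y))²`. -/
def Qform (H : Hypergraph V) (h : V → ℝ) : ℝ :=
  (1 / 2) * ∑ e ∈ H.E, H.w e * sSup { r | ∃ x ∈ e, ∃ y ∈ e, r = (h x - h y) ^ 2 }


-- new material
lemma dot_delta_sub (p q : V) (u : V → ℝ) : dot (delta p - delta q) u = u p - u q := by
  unfold dot delta
  simp only [Pi.sub_apply]
  rw [show (∑ x, ((if x = p then (1:ℝ) else 0) - (if x = q then 1 else 0)) * u x)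
      = ∑ x, ((if x = p then u x else 0) - (if x = q then u x else 0)) by
    apply Finset.sum_congr rfl; intro x _; split_ifs <;> ring]
  rw [Finset.sum_sub_distrib]
  simp

/-- max over pairs in e of u p - u q -/
def Me (u : V → ℝ) (e : Finset V) : ℝ :=
  if h : e.Nonempty then (e ×ˢ e).sup' (h.product h) (fun pq => u pq.1 - u pq.2) else 0

lemma Me_nonneg (u : V → ℝ) {e : Finset V} (he : e.Nonempty) : 0 ≤ Me u e := by
  obtain ⟨a, ha⟩ := he
  rw [Me, dif_pos ⟨a, ha⟩]
  have hm : (a, a) ∈ e ×ˢ e := Finset.mem_product.2 ⟨ha, ha⟩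
  have := Finset.le_sup' (fun pq : V × V => u pq.1 - u pq.2) hm
  exact le_trans (by simp) this

lemma le_Me (u : V → ℝ) {e : Finset V} {p q : V} (hp : p ∈ e) (hq : q ∈ e) :
    u p - u q ≤ Me u e := by
  rw [Me, dif_pos ⟨p, hp⟩]
  have hm : (p, q) ∈ e ×ˢ e := Finset.mem_product.2 ⟨hp, hq⟩
  exact Finset.le_sup' (fun pq : V × V => u pq.1 - u pq.2) hm

lemma exists_Me_pair (u : V → ℝ) {e : Finset V} (he : e.Nonempty) :
    ∃ p ∈ e, ∃ q ∈ e, u p - u q = Me u e := by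
  rw [Me, dif_pos he]
  obtain ⟨pq, hpq, h⟩ := Finset.exists_mem_eq_sup' (he.product he)
    (fun pq : V × V => u pq.1 - u pq.2)
  rw [Finset.mem_product] at hpq
  exact ⟨pq.1, hpq.1, pq.2, hpq.2, h.symm⟩

lemma dot_le_Me {e : Finset V} (he : e.Nonempty) (u : V → ℝ) {b : V → ℝ} (hb : b ∈ Bp e) :
    dot b u ≤ Me u e := by
  have hsub : {b : V → ℝ | ∃ x ∈ e, ∃ y ∈ e, b = delta x - delta y} ⊆
      {b : V → ℝ | dot b u ≤ Me u e} := by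
    rintro b ⟨x, hx, y, hy, rfl⟩
    simpa [dot_delta_sub] using le_Me u hx hy
  have hcvx : Convex ℝ {b : V → ℝ | dot b u ≤ Me u e} := by
    have : IsLinearMap ℝ (fun b : V → ℝ => dot b u) := by
      constructor
      · intro a b; unfold dot; simp [add_mul, Finset.sum_add_distrib]
      · intro c b; unfold dot; simp [Finset.mul_sum, mul_assoc]
    exact convex_halfSpace_le this (Me u e)
  exact convexHull_min hsub hcvx hb

lemma gen_mem_Bp {e : Finset V} {p q : V} (hp : p ∈ e) (hq : q ∈ e) :
    delta p - delta q ∈ Bp e :=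
  subset_convexHull ℝ _ ⟨p, hp, q, hq, rfl⟩

/-- for any maximizer b of dot over Bp e, dot b u = Me u e -/
lemma maximizer_dot_eq {e : Finset V} (he : e.Nonempty) (u : V → ℝ) {b : V → ℝ}
    (hb : b ∈ Bp e) (hmax : ∀ b' ∈ Bp e, dot b' u ≤ dot b u) : dot b u = Me u e := by
  refine le_antisymm (dot_le_Me he u hb) ?_
  obtain ⟨p, hp, q, hq, h⟩ := exists_Me_pair u he
  rw [← h, ← dot_delta_sub]
  exact hmax _ (gen_mem_Bp hp hq)


lemma dot_sum_left {ι : Type*} (s : Finset ι) (c : ι → ℝ) (b : ι → V → ℝ) (u : V → ℝ) :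
    dot (∑ e ∈ s, (c e) • b e) u = ∑ e ∈ s, c e * dot (b e) u := by
  unfold dot
  have : ∀ x : V, (∑ e ∈ s, (c e) • b e) x = ∑ e ∈ s, c e * b e x := by
    intro x; rw [Finset.sum_apply]; rfl
  simp_rw [this, Finset.sum_mul, Finset.mul_sum]
  rw [Finset.sum_comm]
  apply Finset.sum_congr rfl; intro e _; apply Finset.sum_congr rfl; intro x _; ring

lemma lap_eq (H : Hypergraph V) {u h : V → ℝ} (hh : h ∈ Lap H u) :
    ∃ b : Finset V → (V → ℝ), (∀ e ∈ H.E, b e ∈ Bp e ∧ dot (b e) u = Me u e) ∧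
      h = ∑ e ∈ H.E, (H.w e * Me u e) • b e := by
  obtain ⟨b, hb, rfl⟩ := hh
  refine ⟨b, fun e he => ⟨(hb e he).1,
    maximizer_dot_eq (H.e_nonempty e he) u (hb e he).1 (hb e he).2⟩, ?_⟩
  apply Finset.sum_congr rfl
  intro e he
  rw [maximizer_dot_eq (H.e_nonempty e he) u (hb e he).1 (hb e he).2]

lemma lap_dot_le (H : Hypergraph V) {u : V → ℝ} {h : V → ℝ} (hh : h ∈ Lap H u)
    (u' : V → ℝ) : dot h u' ≤ ∑ e ∈ H.E, H.w e * (Me u e * Me u' e) := by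
  obtain ⟨b, hb, rfl⟩ := lap_eq H hh
  rw [dot_sum_left]
  apply Finset.sum_le_sum
  intro e he
  rw [mul_assoc]
  apply mul_le_mul_of_nonneg_left _ (le_of_lt (H.w_pos e he))
  exact mul_le_mul_of_nonneg_left (dot_le_Me (H.e_nonempty e he) u' (hb e he).1)
    (Me_nonneg u (H.e_nonempty e he))

lemma lap_dot_self (H : Hypergraph V) {u : V → ℝ} {h : V → ℝ} (hh : h ∈ Lap H u) :
    dot h u = ∑ e ∈ H.E, H.w e * (Me u e * Me u e) := by
  obtain ⟨b, hb, rfl⟩ := lap_eq H hh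
  rw [dot_sum_left]
  apply Finset.sum_congr rfl
  intro e he
  rw [(hb e he).2, mul_assoc]

lemma dot_sub_right (a u v : V → ℝ) : dot a (u - v) = dot a u - dot a v := by
  unfold dot; simp [mul_sub, Finset.sum_sub_distrib]

lemma dot_sub_left (a b u : V → ℝ) : dot (a - b) u = dot a u - dot b u := by
  unfold dot; simp [sub_mul, Finset.sum_sub_distrib]

lemma dot_smul_left (c : ℝ) (a u : V → ℝ) : dot (c • a) u = c * dot a u := by
  unfold dot; simp [Finset.mul_sum, mul_assoc]

/-- monotonicity of the normalized Laplacian -/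
lemma NL_monotone (H : Hypergraph V) {g₁ g₂ h₁ h₂ : V → ℝ}
    (H1 : h₁ ∈ NL H g₁) (H2 : h₂ ∈ NL H g₂) :
    0 ≤ dot (h₁ - h₂) (Dinv H g₁ - Dinv H g₂) := by
  set u₁ := Dinv H g₁
  set u₂ := Dinv H g₂
  have e11 := lap_dot_self H H1
  have e22 := lap_dot_self H H2
  have e12 := lap_dot_le H H1 u₂
  have e21 := lap_dot_le H H2 u₁
  rw [dot_sub_left, dot_sub_right, dot_sub_right]
  have key : ∀ e ∈ H.E, 0 ≤ H.w e * (Me u₁ e * Me u₁ e) - H.w e * (Me u₁ e * Me u₂ e)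
      - (H.w e * (Me u₂ e * Me u₁ e) - H.w e * (Me u₂ e * Me u₂ e)) := by
    intro e he
    have : H.w e * (Me u₁ e * Me u₁ e) - H.w e * (Me u₁ e * Me u₂ e)
      - (H.w e * (Me u₂ e * Me u₁ e) - H.w e * (Me u₂ e * Me u₂ e))
      = H.w e * (Me u₁ e - Me u₂ e)^2 := by ring
    rw [this]
    have := H.w_pos e he
    positivity
  have := Finset.sum_nonneg key
  simp only [Finset.sum_sub_distrib] at this
  linarith

lemma resolvent_unique (H : Hypergraph V) (hdeg : ∀ x : V, 0 < deg H x)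
    {l : ℝ} (hl : 0 < l) {f g₁ g₂ h₁ h₂ : V → ℝ}
    (H1 : h₁ ∈ NL H g₁) (H2 : h₂ ∈ NL H g₂)
    (e1 : f = g₁ + l • h₁) (e2 : f = g₂ + l • h₂) : g₁ = g₂ := by
  have hgg : g₁ - g₂ = l • (h₂ - h₁) := by
    have : g₁ + l • h₁ = g₂ + l • h₂ := by rw [← e1, ← e2]
    funext x
    have := congrFun this x
    simp only [Pi.add_apply, Pi.smul_apply, smul_eq_mul] at this
    simp only [Pi.sub_apply, Pi.smul_apply, smul_eq_mul]
    linarith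
  have hS : dot (g₁ - g₂) (Dinv H g₁ - Dinv H g₂) ≤ 0 := by
    rw [hgg, dot_smul_left]
    have := NL_monotone H H1 H2
    have h2 : dot (h₂ - h₁) (Dinv H g₁ - Dinv H g₂) ≤ 0 := by
      have : dot (h₂ - h₁) (Dinv H g₁ - Dinv H g₂)
          = -(dot (h₁ - h₂) (Dinv H g₁ - Dinv H g₂)) := by
        rw [dot_sub_left, dot_sub_left]; ring
      rw [this]; linarith
    exact mul_nonpos_of_nonneg_of_nonpos hl.le h2
  have hSe : dot (g₁ - g₂) (Dinv H g₁ - Dinv H g₂)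
      = ∑ x, (g₁ x - g₂ x)^2 / deg H x := by
    unfold dot Dinv
    apply Finset.sum_congr rfl
    intro x _
    simp only [Pi.sub_apply]
    ring
  have hall : ∀ x ∈ Finset.univ, (0:ℝ) ≤ (g₁ x - g₂ x)^2 / deg H x := by
    intro x _; have := hdeg x; positivity
  have hz : ∀ x ∈ Finset.univ, (g₁ x - g₂ x)^2 / deg H x = 0 := by
    intro x hx
    by_contra hne
    have hlt : 0 < (g₁ x - g₂ x)^2 / deg H x := lt_of_le_of_ne (hall x hx) (Ne.symm hne)
    have : 0 < ∑ x, (g₁ x - g₂ x)^2 / deg H x :=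
      Finset.sum_pos' hall ⟨x, hx, hlt⟩
    rw [← hSe] at this
    linarith
  funext x
  have := hz x (Finset.mem_univ x)
  have hd := hdeg x
  field_simp at this
  have h0 : g₁ x - g₂ x = 0 := (pow_eq_zero_iff two_ne_zero).1 (by linarith)
  linarith


lemma continuous_sup' {ι : Type*} (s : Finset ι) (hs : s.Nonempty)
    (g : ι → (V → ℝ) → ℝ) (hg : ∀ i, Continuous (g i)) :
    Continuous (fun u => s.sup' hs (fun i => g i u)) := by
  induction hs using Finset.Nonempty.cons_induction with
  | singleton a => simpa using hg a
  | cons a s ha hs ih =>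
      have : (fun u => (Finset.cons a s ha).sup' (Finset.cons_nonempty ha) (fun i => g i u))
          = fun u => max (g a u) (s.sup' hs (fun i => g i u)) := by
        funext u; rw [Finset.sup'_cons]
      rw [this]
      exact (hg a).max ih

lemma continuous_Me (e : Finset V) : Continuous (fun u : V → ℝ => Me u e) := by
  by_cases h : e.Nonempty
  · have : (fun u : V → ℝ => Me u e)
        = fun u => (e ×ˢ e).sup' (h.product h) (fun pq => u pq.1 - u pq.2) := by
      funext u; rw [Me, dif_pos h]
    rw [this]
    exact continuous_sup' _ _ _ (fun pq => (continuous_apply pq.1).sub (continuous_apply pq.2))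
  · have : (fun u : V → ℝ => Me u e) = fun _ => (0:ℝ) := by
      funext u; rw [Me, dif_neg h]
    rw [this]; exact continuous_const

/-- the energy functional for the resolvent problem -/
def Phi (H : Hypergraph V) (l : ℝ) (f : V → ℝ) (u : V → ℝ) : ℝ :=
  (∑ x, deg H x * (u x - Dinv H f x)^2)/2 + l * (∑ e ∈ H.E, H.w e * (Me u e)^2)/2

lemma continuous_Phi (H : Hypergraph V) (l : ℝ) (f : V → ℝ) : Continuous (Phi H l f) := by
  apply Continuous.add
  · apply Continuous.div_const
    apply continuous_finset_sum
    intro x _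
    exact (continuous_const.mul (((continuous_apply x).sub continuous_const).pow 2))
  · apply Continuous.div_const
    apply Continuous.mul continuous_const
    apply continuous_finset_sum
    intro e _
    exact continuous_const.mul ((continuous_Me e).pow 2)

lemma exists_min_Phi [Nonempty V] (H : Hypergraph V) (hdeg : ∀ x : V, 0 < deg H x)
    {l : ℝ} (hl : 0 < l) (f : V → ℝ) : ∃ u : V → ℝ, ∀ u', Phi H l f u ≤ Phi H l f u' := by
  classical
  set v := Dinv H f with hv
  set dmin := Finset.univ.inf' Finset.univ_nonempty (deg H) with hdmin
  have hdminpos : 0 < dmin := by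
    obtain ⟨x, _, hx⟩ := Finset.exists_mem_eq_inf' Finset.univ_nonempty (deg H)
    rw [hdmin, hx]; exact hdeg x
  have coercive : ∀ u : V → ℝ, dmin/2 * ‖u - v‖^2 ≤ Phi H l f u := by
    intro u
    have hnorm : ∃ x : V, ‖u - v‖ = |(u - v) x| := by
      obtain ⟨x, _, hx⟩ := Finset.exists_mem_eq_sup' (Finset.univ_nonempty (α := V))
        (fun x => ‖(u - v) x‖₊)
      refine ⟨x, ?_⟩
      rw [Pi.norm_def, ← Finset.sup'_eq_sup Finset.univ_nonempty, hx, coe_nnnorm,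
        Real.norm_eq_abs]
    obtain ⟨x₀, hx₀⟩ := hnorm
    have h1 : dmin/2 * ‖u - v‖^2 ≤ deg H x₀ * (u x₀ - v x₀)^2 / 2 := by
      rw [hx₀, sq_abs]
      have : (u - v) x₀ = u x₀ - v x₀ := rfl
      rw [this]
      have := Finset.inf'_le (deg H) (Finset.mem_univ x₀)
      rw [← hdmin] at this
      nlinarith [sq_nonneg (u x₀ - v x₀)]
    have h2 : deg H x₀ * (u x₀ - v x₀)^2 ≤ ∑ x, deg H x * (u x - v x)^2 := by
      apply Finset.single_le_sum (f := fun x => deg H x * (u x - v x)^2)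
        (fun x _ => by have := hdeg x; positivity) (Finset.mem_univ x₀)
    have h3 : 0 ≤ l * (∑ e ∈ H.E, H.w e * (Me u e)^2)/2 := by
      apply div_nonneg _ (by norm_num)
      apply mul_nonneg hl.le
      apply Finset.sum_nonneg
      intro e he
      have := H.w_pos e he; positivity
    unfold Phi
    rw [← hv]
    linarith
  set R := Real.sqrt (2 * Phi H l f v / dmin) + 1 with hR
  have hRpos : 0 ≤ R := by positivity
  obtain ⟨u, huball, humin⟩ := (isCompact_closedBall v R).exists_isMinOn
    ⟨v, Metric.mem_closedBall_self hRpos⟩ (continuous_Phi H l f).continuousOn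
  refine ⟨u, fun u' => ?_⟩
  by_cases hu' : u' ∈ Metric.closedBall v R
  · exact humin hu'
  · have hd : R < ‖u' - v‖ := by
      rw [Metric.mem_closedBall, not_le, dist_eq_norm] at hu'
      exact hu'
    have hPhiv : 0 ≤ Phi H l f v := le_trans (by positivity) (coercive v)
    have hs : Real.sqrt (2 * Phi H l f v / dmin) ^ 2 = 2 * Phi H l f v / dmin :=
      Real.sq_sqrt (by positivity)
    have hkey : Phi H l f v < dmin/2 * ‖u' - v‖^2 := by
      have h1 : R^2 < ‖u' - v‖^2 := by
        apply pow_lt_pow_left₀ hd hRpos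
        norm_num
      have h2 : 2 * Phi H l f v / dmin < R^2 := by
        rw [hR]
        nlinarith [Real.sqrt_nonneg (2 * Phi H l f v / dmin)]
      have h3 : dmin/2 * (2 * Phi H l f v / dmin) = Phi H l f v := by
        field_simp
      have h4 := mul_lt_mul_of_pos_left (lt_trans h2 h1) (by positivity : (0:ℝ) < dmin/2)
      linarith
    have := coercive u'
    have hv' : Phi H l f u ≤ Phi H l f v := humin (Metric.mem_closedBall_self hRpos)
    linarith


/-- active pairs -/
def act (u : V → ℝ) (e : Finset V) : Finset (V × V) :=
  (e ×ˢ e).filter (fun pq => u pq.1 - u pq.2 = Me u e)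

def MeAct (u : V → ℝ) (e : Finset V) (w : V → ℝ) : ℝ :=
  if h : (act u e).Nonempty then (act u e).sup' h (fun pq => w pq.1 - w pq.2) else 0

lemma act_nonempty (u : V → ℝ) {e : Finset V} (he : e.Nonempty) : (act u e).Nonempty := by
  obtain ⟨p, hp, q, hq, h⟩ := exists_Me_pair u he
  exact ⟨(p, q), Finset.mem_filter.2 ⟨Finset.mem_product.2 ⟨hp, hq⟩, h⟩⟩

lemma le_MeAct (u : V → ℝ) {e : Finset V} (w : V → ℝ) {pq : V × V} (h : pq ∈ act u e) :
    w pq.1 - w pq.2 ≤ MeAct u e w := by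
  rw [MeAct, dif_pos ⟨pq, h⟩]
  exact Finset.le_sup' (fun pq : V × V => w pq.1 - w pq.2) h

lemma exists_MeAct_pair (u : V → ℝ) {e : Finset V} (he : e.Nonempty) (w : V → ℝ) :
    ∃ pq ∈ act u e, w pq.1 - w pq.2 = MeAct u e w := by
  rw [MeAct, dif_pos (act_nonempty u he)]
  obtain ⟨pq, h1, h2⟩ := Finset.exists_mem_eq_sup' (act_nonempty u he)
    (fun pq : V × V => w pq.1 - w pq.2)
  exact ⟨pq, h1, h2.symm⟩

/-- small-t bound on Me along a direction -/
lemma Me_dir (u w : V → ℝ) (e : Finset V) :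
    ∃ t₀ > (0:ℝ), ∀ t : ℝ, 0 < t → t ≤ t₀ →
      Me (u + t • w) e ≤ Me u e + t * MeAct u e w := by
  by_cases he : e.Nonempty
  · classical
    set g : V × V → ℝ := fun pq =>
      if 0 < Me u e - (u pq.1 - u pq.2) ∧ 0 < (w pq.1 - w pq.2) - MeAct u e w
      then (Me u e - (u pq.1 - u pq.2)) / ((w pq.1 - w pq.2) - MeAct u e w)
      else 1 with hg
    have hne : (e ×ˢ e).Nonempty := he.product he
    refine ⟨(e ×ˢ e).inf' hne g, ?_, ?_⟩
    · refine Finset.lt_inf'_iff (f := g) hne |>.2 ?_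
      intro pq _
      rw [hg]
      dsimp only
      split_ifs with h
      · exact div_pos h.1 h.2
      · norm_num
    · intro t ht htle
      have hb : ∀ pq ∈ e ×ˢ e,
          (u + t • w) pq.1 - (u + t • w) pq.2 ≤ Me u e + t * MeAct u e w := by
        intro pq hpq
        have hval : (u + t • w) pq.1 - (u + t • w) pq.2
            = (u pq.1 - u pq.2) + t * (w pq.1 - w pq.2) := by
          simp only [Pi.add_apply, Pi.smul_apply, smul_eq_mul]; ring
        rw [hval]
        rw [Finset.mem_product] at hpq
        have hle : u pq.1 - u pq.2 ≤ Me u e := le_Me u hpq.1 hpq.2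
        by_cases hact : u pq.1 - u pq.2 = Me u e
        · have : pq ∈ act u e := Finset.mem_filter.2 ⟨Finset.mem_product.2 hpq, hact⟩
          have := le_MeAct u w this
          nlinarith
        · by_cases hw : w pq.1 - w pq.2 ≤ MeAct u e w
          · nlinarith
          · push_neg at hw
            have hgap : 0 < Me u e - (u pq.1 - u pq.2) := by
              cases lt_or_eq_of_le hle with
              | inl h => linarith
              | inr h => exact absurd h hact
            have hdiff : 0 < (w pq.1 - w pq.2) - MeAct u e w := by linarith
            have hgpq : g pq = (Me u e - (u pq.1 - u pq.2)) / ((w pq.1 - w pq.2) - MeAct u e w) := by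
              rw [hg]; dsimp only; rw [if_pos ⟨hgap, hdiff⟩]
            have htg : t ≤ g pq :=
              le_trans htle (Finset.inf'_le g (Finset.mem_product.2 hpq))
            rw [hgpq] at htg
            have := (le_div_iff₀ hdiff).1 htg
            linarith
      have : Me (u + t • w) e ≤ Me u e + t * MeAct u e w := by
        rw [Me, dif_pos he]
        exact Finset.sup'_le _ _ (fun pq hpq => hb pq hpq)
      exact this
  · refine ⟨1, by norm_num, fun t ht _ => ?_⟩
    have h1 : Me (u + t • w) e = 0 := by rw [Me, dif_neg he]
    have h2 : Me u e = 0 := by rw [Me, dif_neg he]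
    have h3 : MeAct u e w = 0 := by
      rw [MeAct, dif_neg]
      intro ⟨pq, hpq⟩
      rw [act, Finset.mem_filter, Finset.mem_product] at hpq
      exact he ⟨pq.1, hpq.1.1⟩
    rw [h1, h2, h3]; norm_num

/-- first-order optimality condition at a global minimizer of Phi -/
lemma dirineq (H : Hypergraph V) {l : ℝ} (hl : 0 < l) (f : V → ℝ) {u : V → ℝ}
    (hmin : ∀ u', Phi H l f u ≤ Phi H l f u') (w : V → ℝ) :
    0 ≤ (∑ x, deg H x * (u x - Dinv H f x) * w x)
      + l * ∑ e ∈ H.E, H.w e * (Me u e * MeAct u e w) := by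
  classical
  set v := Dinv H f
  set A := (∑ x, deg H x * (u x - v x) * w x)
      + l * ∑ e ∈ H.E, H.w e * (Me u e * MeAct u e w) with hA
  by_contra hneg
  push_neg at hneg
  set B := (∑ x, deg H x * w x * w x)/2
      + l * (∑ e ∈ H.E, H.w e * (MeAct u e w)^2)/2 with hB
  choose t0 ht0pos ht0 using Me_dir u w
  have hexp : ∀ t : ℝ, 0 < t → (∀ e ∈ H.E, t ≤ t0 e) →
      Phi H l f (u + t • w) ≤ Phi H l f u + t * A + t^2 * B := by
    intro t ht hte
    have hquad : (∑ x, deg H x * ((u + t • w) x - v x)^2)/2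
        = (∑ x, deg H x * (u x - v x)^2)/2
          + t * (∑ x, deg H x * (u x - v x) * w x) + t^2 * ((∑ x, deg H x * w x * w x)/2) := by
      have : ∀ x : V, deg H x * ((u + t • w) x - v x)^2
          = deg H x * (u x - v x)^2 + t * (2 * (deg H x * (u x - v x) * w x))
            + t^2 * (deg H x * w x * w x) := by
        intro x
        simp only [Pi.add_apply, Pi.smul_apply, smul_eq_mul]
        ring
      simp_rw [this, Finset.sum_add_distrib, ← Finset.mul_sum]
      ring
    have hedge : ∀ e ∈ H.E, H.w e * (Me (u + t • w) e)^2
        ≤ H.w e * ((Me u e)^2 + t * (2 * (Me u e * MeAct u e w)) + t^2 * (MeAct u e w)^2) := by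
      intro e he
      apply mul_le_mul_of_nonneg_left _ (H.w_pos e he).le
      have hle := ht0 e t ht (hte e he)
      have hnn : 0 ≤ Me (u + t • w) e := Me_nonneg _ (H.e_nonempty e he)
      nlinarith
    have hedgesum : l * (∑ e ∈ H.E, H.w e * (Me (u + t • w) e)^2)/2
        ≤ l * (∑ e ∈ H.E, H.w e * (Me u e)^2)/2
          + t * (l * ∑ e ∈ H.E, H.w e * (Me u e * MeAct u e w))
          + t^2 * (l * (∑ e ∈ H.E, H.w e * (MeAct u e w)^2)/2) := by
      have hsum := Finset.sum_le_sum hedge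
      have hexpand : ∑ e ∈ H.E, H.w e * ((Me u e)^2 + t * (2 * (Me u e * MeAct u e w)) + t^2 * (MeAct u e w)^2)
          = ∑ e ∈ H.E, H.w e * (Me u e)^2 + t * (2 * ∑ e ∈ H.E, H.w e * (Me u e * MeAct u e w))
            + t^2 * ∑ e ∈ H.E, H.w e * (MeAct u e w)^2 := by
        simp_rw [mul_add, Finset.sum_add_distrib, Finset.mul_sum]
        congr 1
        · congr 1
          apply Finset.sum_congr rfl; intro e _; ring
        · apply Finset.sum_congr rfl; intro e _; ring
      rw [hexpand] at hsum
      have hl2 : 0 < l := hl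
      nlinarith
    unfold Phi
    rw [hA, hB]
    have := hquad
    linarith
  -- choose a small t
  set tA := (-A)/(2*(|B|+1)) with htA
  have htApos : 0 < tA := by
    apply div_pos (by linarith) (by positivity)
  by_cases hE : H.E.Nonempty
  · set t := min tA (H.E.inf' hE t0) with htdef
    have htpos : 0 < t := lt_min htApos ((Finset.lt_inf'_iff hE).2 (fun e _ => ht0pos e))
    have hte : ∀ e ∈ H.E, t ≤ t0 e := fun e he =>
      le_trans (min_le_right _ _) (Finset.inf'_le t0 he)
    have hbound := hexp t htpos hte
    have hmin' := hmin (u + t • w)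
    have htle : t ≤ tA := min_le_left _ _
    have h1 : t * (|B|+1) ≤ -A/2 := by
      rw [htA] at htle
      have := mul_le_mul_of_nonneg_right htle (by positivity : (0:ℝ) ≤ |B|+1)
      calc t * (|B|+1) ≤ (-A)/(2*(|B|+1)) * (|B|+1) := this
        _ = -A/2 := by field_simp
    have h2 : t^2 * B ≤ t * (-A/2) := by
      have : t^2 * B ≤ t^2 * (|B|+1) := by
        apply mul_le_mul_of_nonneg_left _ (by positivity)
        calc B ≤ |B| := le_abs_self B
          _ ≤ |B| + 1 := by linarith
      calc t^2 * B ≤ t^2 * (|B|+1) := this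
        _ = t * (t * (|B|+1)) := by ring
        _ ≤ t * (-A/2) := mul_le_mul_of_nonneg_left h1 htpos.le
    have h3 : t * (-A/2) = -(t*A)/2 := by ring
    have h4 : t * A < 0 := mul_neg_of_pos_of_neg htpos hneg
    have h5 : (0:ℝ) ≤ t * A + t^2 * B := by linarith
    clear_value t tA B A
    linarith
  · -- no edges: A = dot part, B quadratic
    set t := tA with htdef
    have hbound := hexp t htApos (fun e he => absurd ⟨e, he⟩ hE)
    have hmin' := hmin (u + t • w)
    have h1 : t * (|B|+1) ≤ -A/2 := by
      rw [htA]
      have : (-A)/(2*(|B|+1)) * (|B|+1) = -A/2 := by field_simp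
      rw [← this]
    have h2 : t^2 * B ≤ t * (-A/2) := by
      have hb : B ≤ |B| + 1 := by linarith [le_abs_self B]
      calc t^2 * B ≤ t^2 * (|B|+1) := mul_le_mul_of_nonneg_left hb (by positivity)
        _ = t * (t * (|B|+1)) := by ring
        _ ≤ t * (-A/2) := mul_le_mul_of_nonneg_left h1 htApos.le
    have h3 : t * (-A/2) = -(t*A)/2 := by ring
    have h4 : t * A < 0 := mul_neg_of_pos_of_neg htApos hneg
    have h5 : (0:ℝ) ≤ t * A + t^2 * B := by linarith
    clear_value t tA B A
    linarith


lemma resolvent_exists [Nonempty V] (H : Hypergraph V) (hdeg : ∀ x : V, 0 < deg H x)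
    {l : ℝ} (hl : 0 < l) (f : V → ℝ) : ∃ g h : V → ℝ, h ∈ NL H g ∧ f = g + l • h := by
  classical
  obtain ⟨u, hmin⟩ := exists_min_Phi H hdeg hl f
  set v := Dinv H f with hv
  set P : (Finset V → V × V) → Prop := fun σ => ∀ e ∈ H.E, σ e ∈ act u e with hP
  set F : (Finset V → V × V) → (V → ℝ) := fun σ =>
    ∑ e ∈ H.E, (l * (H.w e * Me u e)) • (delta (σ e).1 - delta (σ e).2) with hF
  set S : Set (V → ℝ) := F '' {σ | P σ} with hS
  have hSfin : S.Finite := (Set.toFinite {σ | P σ}).image F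
  set c₀ : V → ℝ := fun x => f x - deg H x * u x with hc₀def
  have hfv : ∀ x, f x = deg H x * v x := by
    intro x
    rw [hv]
    unfold Dinv
    exact (mul_div_cancel₀ (f x) (hdeg x).ne').symm
  have hc₀ : c₀ ∈ convexHull ℝ S := by
    by_contra hnot
    obtain ⟨φ, r, hφ1, hφ2⟩ := _root_.geometric_hahn_banach_point_closed
      (convex_convexHull ℝ S) ((hSfin.isCompact_convexHull ℝ).isClosed) hnot
    set wd : V → ℝ := fun x => -(φ (Pi.single x (1:ℝ))) with hwd
    have hφrep : ∀ z : V → ℝ, φ z = -(dot z wd) := by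
      intro z
      have h1 : φ z = ∑ x, z x * φ (Pi.single x (1:ℝ)) := by
        have hz : z = ∑ x, z x • (Pi.single x (1:ℝ) : V → ℝ) := by
          funext y
          rw [Finset.sum_apply]
          simp [Pi.single_apply, eq_comm]
        conv_lhs => rw [hz]
        rw [map_sum]
        apply Finset.sum_congr rfl
        intro x _
        rw [map_smul]
        simp
      rw [h1]
      unfold dot
      rw [hwd, ← Finset.sum_neg_distrib]
      apply Finset.sum_congr rfl
      intro x _
      dsimp only
      ring
    have hdir := dirineq H hl f hmin wd
    have hσex : ∀ e : Finset V, ∃ pq : V × V,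
        e ∈ H.E → (pq ∈ act u e ∧ wd pq.1 - wd pq.2 = MeAct u e wd) := by
      intro e
      by_cases he : e ∈ H.E
      · obtain ⟨pq, h1, h2⟩ := exists_MeAct_pair u (H.e_nonempty e he) wd
        exact ⟨pq, fun _ => ⟨h1, h2⟩⟩
      · exact ⟨(Classical.arbitrary V, Classical.arbitrary V), fun h => absurd h he⟩
    choose σ hσ using hσex
    have hFσS : F σ ∈ S := ⟨σ, fun e he => (hσ e he).1, rfl⟩
    have h2 := hφ2 (F σ) (subset_convexHull ℝ S hFσS)
    have hdot1 : dot (F σ) wd = l * ∑ e ∈ H.E, H.w e * (Me u e * MeAct u e wd) := by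
      rw [hF]
      dsimp only
      rw [dot_sum_left]
      rw [Finset.mul_sum]
      apply Finset.sum_congr rfl
      intro e he
      rw [dot_delta_sub, (hσ e he).2]
      ring
    have hdot2 : dot c₀ wd = -(∑ x, deg H x * (u x - v x) * wd x) := by
      unfold dot
      rw [← Finset.sum_neg_distrib]
      apply Finset.sum_congr rfl
      intro x _
      rw [hc₀def]
      dsimp only
      rw [hfv x]
      ring
    rw [hφrep] at hφ1
    rw [hφrep] at h2
    have hcon : dot (F σ) wd < dot c₀ wd := by linarith
    rw [hdot1, hdot2] at hcon
    linarith
  rw [mem_convexHull_iff_exists_fintype] at hc₀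
  obtain ⟨ι, hι, wt, z, hwt0, hwt1, hzS, hsum⟩ := hc₀
  choose σ hσP hσeq using hzS
  set b : Finset V → (V → ℝ) :=
    fun e => ∑ i, wt i • (delta (σ i e).1 - delta (σ i e).2) with hb
  have hbBp : ∀ e ∈ H.E, b e ∈ Bp e := by
    intro e he
    have hmem : ∀ i : ι, (delta (σ i e).1 - delta (σ i e).2 : V → ℝ)
        ∈ {b : V → ℝ | ∃ x ∈ e, ∃ y ∈ e, b = delta x - delta y} := by
      intro i
      have := hσP i e he
      rw [act, Finset.mem_filter, Finset.mem_product] at this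
      exact ⟨(σ i e).1, this.1.1, (σ i e).2, this.1.2, rfl⟩
    have := Finset.centerMass_mem_convexHull (Finset.univ : Finset ι)
      (fun i _ => hwt0 i) (by rw [hwt1]; norm_num)
      (fun i _ => hmem i)
    rwa [Finset.centerMass_eq_of_sum_1 _ _ hwt1] at this
  have hbdot : ∀ e ∈ H.E, dot (b e) u = Me u e := by
    intro e he
    rw [hb]
    dsimp only
    rw [dot_sum_left]
    have : ∀ i : ι, dot (delta (σ i e).1 - delta (σ i e).2) u = Me u e := by
      intro i
      rw [dot_delta_sub]
      have := hσP i e he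
      rw [act, Finset.mem_filter] at this
      exact this.2
    simp_rw [this]
    rw [← Finset.sum_mul, hwt1, one_mul]
  set g : V → ℝ := fun x => deg H x * u x with hgdef
  have hDinvg : Dinv H g = u := by
    funext x
    unfold Dinv
    rw [hgdef]
    dsimp only
    exact mul_div_cancel_left₀ (u x) (hdeg x).ne'
  refine ⟨g, ∑ e ∈ H.E, (H.w e * dot (b e) (Dinv H g)) • b e, ⟨b, ?_, rfl⟩, ?_⟩
  · intro e he
    refine ⟨hbBp e he, ?_⟩
    intro b' hb'
    rw [hDinvg, hbdot e he]
    exact dot_le_Me (H.e_nonempty e he) u hb'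
  · have hlh : l • (∑ e ∈ H.E, (H.w e * dot (b e) (Dinv H g)) • b e) = ∑ i, wt i • z i := by
      rw [hDinvg, Finset.smul_sum]
      have lhs_eq : ∀ e ∈ H.E, l • ((H.w e * dot (b e) u) • b e)
          = ∑ i, (wt i * (l * (H.w e * Me u e))) • (delta (σ i e).1 - delta (σ i e).2) := by
        intro e he
        rw [hbdot e he, hb]
        dsimp only
        rw [Finset.smul_sum, Finset.smul_sum]
        apply Finset.sum_congr rfl
        intro i _
        simp only [smul_smul]
        congr 1
        ring
      rw [Finset.sum_congr rfl lhs_eq, Finset.sum_comm]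
      apply Finset.sum_congr rfl
      intro i _
      rw [← hσeq i, hF]
      dsimp only
      rw [Finset.smul_sum]
      apply Finset.sum_congr rfl
      intro e _
      rw [smul_smul]
    funext x
    have hx := congrFun hsum x
    have hx2 := congrFun hlh x
    have : (∑ i, wt i • z i) x = c₀ x := by
      rw [← hsum]
    simp only [Pi.add_apply, Pi.smul_apply, smul_eq_mul]
    have hcx : c₀ x = f x - deg H x * u x := rfl
    have hgx : g x = deg H x * u x := rfl
    have hval : (l • (∑ e ∈ H.E, (H.w e * dot (b e) (Dinv H g)) • b e)) x = c₀ x := by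
      rw [hlh, this]
    simp only [Pi.smul_apply, smul_eq_mul] at hval
    rw [hgx]
    linarith [hval, hcx.symm ▸ hval]


lemma Resolvent_spec [Nonempty V] (H : Hypergraph V) (hdeg : ∀ x : V, 0 < deg H x)
    {l : ℝ} (hl : 0 < l) (f : V → ℝ) :
    ∃ h ∈ NL H (Resolvent H l f), f = Resolvent H l f + l • h := by
  obtain ⟨g, h, hh, heq⟩ := resolvent_exists H hdeg hl f
  exact Classical.epsilon_spec (p := fun g => ∃ h ∈ NL H g, f = g + l • h) ⟨g, h, hh, heq⟩

lemma Resolvent_eq [Nonempty V] (H : Hypergraph V) (hdeg : ∀ x : V, 0 < deg H x)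
    {l : ℝ} (hl : 0 < l) {f g h : V → ℝ} (hh : h ∈ NL H g) (heq : f = g + l • h) :
    Resolvent H l f = g := by
  obtain ⟨h', hh', heq'⟩ := Resolvent_spec H hdeg hl f
  exact resolvent_unique H hdeg hl hh' hh heq' heq

lemma dot_add_left (a b u : V → ℝ) : dot (a + b) u = dot a u + dot b u := by
  unfold dot; simp [add_mul, Finset.sum_add_distrib]

lemma dot_smul_right (c : ℝ) (a u : V → ℝ) : dot a (c • u) = c * dot a u := by
  unfold dot; simp only [Pi.smul_apply, smul_eq_mul, Finset.mul_sum]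
  apply Finset.sum_congr rfl; intro x _; ring

lemma Dinv_smul (H : Hypergraph V) (c : ℝ) (g : V → ℝ) :
    Dinv H (c • g) = c • Dinv H g := by
  funext x; unfold Dinv; simp only [Pi.smul_apply, smul_eq_mul]; ring

lemma NL_smul (H : Hypergraph V) {c : ℝ} (hc : 0 < c) {g h : V → ℝ} (hh : h ∈ NL H g) :
    c • h ∈ NL H (c • g) := by
  obtain ⟨b, hb, rfl⟩ := hh
  rw [NL, Dinv_smul]
  refine ⟨b, fun e he => ⟨(hb e he).1, fun b' hb' => ?_⟩, ?_⟩
  · rw [dot_smul_right, dot_smul_right]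
    exact mul_le_mul_of_nonneg_left ((hb e he).2 b' hb') hc.le
  · rw [Finset.smul_sum]
    apply Finset.sum_congr rfl
    intro e he
    rw [smul_smul, dot_smul_right]
    congr 1
    ring

lemma Resolvent_smul [Nonempty V] (H : Hypergraph V) (hdeg : ∀ x : V, 0 < deg H x)
    {l : ℝ} (hl : 0 < l) {c : ℝ} (hc : 0 < c) (f : V → ℝ) :
    Resolvent H l (c • f) = c • Resolvent H l f := by
  obtain ⟨h, hh, heq⟩ := Resolvent_spec H hdeg hl f
  apply Resolvent_eq H hdeg hl (NL_smul H hc hh)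
  nth_rewrite 1 [heq]
  funext x
  simp only [Pi.add_apply, Pi.smul_apply, smul_eq_mul]
  ring

lemma bb_sign_at_ext {e : Finset V} (u : V → ℝ) {bb : V → ℝ}
    (hbb : bb ∈ Bp e) (hdotm : dot bb u = Me u e) (hMe : 0 < Me u e) {a : V}
    {s : ℝ} (hs : s = 1 ∨ s = -1)
    (hext : ∀ p q, p ∈ e → q ∈ e → (if s = 1 then q else p) = a → u p - u q ≤ 0) :
    0 ≤ s * bb a := by
  set M := Me u e with hM
  set L : (V → ℝ) → ℝ := fun b => s * b a - M⁻¹ * dot b u with hL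
  have hlin : IsLinearMap ℝ L := by
    constructor
    · intro b₁ b₂
      rw [hL]; dsimp only
      rw [dot_add_left]
      simp only [Pi.add_apply]
      ring
    · intro co b
      rw [hL]; dsimp only
      have : dot (co • b) u = co * dot b u := dot_smul_left co b u
      rw [this]
      simp only [Pi.smul_apply, smul_eq_mul]
      ring
  have hhalf : Bp e ⊆ {b : V → ℝ | -1 ≤ L b} := by
    apply convexHull_min _ (convex_halfSpace_ge hlin (-1))
    rintro b ⟨p, hp, q, hq, rfl⟩
    show -1 ≤ L (delta p - delta q)
    rw [hL]; dsimp only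
    rw [dot_delta_sub]
    have hMinv : 0 < M⁻¹ := inv_pos.2 hMe
    have hpq : u p - u q ≤ M := le_Me u hp hq
    have hda : (delta p - delta q) a = (if a = p then (1:ℝ) else 0) - (if a = q then 1 else 0) := rfl
    rw [hda]
    set A := (if a = p then (1:ℝ) else 0) with hA
    set B := (if a = q then (1:ℝ) else 0) with hB
    have hA0 : 0 ≤ A := by rw [hA]; split_ifs <;> norm_num
    have hA1 : A ≤ 1 := by rw [hA]; split_ifs <;> norm_num
    have hB0 : 0 ≤ B := by rw [hB]; split_ifs <;> norm_num
    have hB1 : B ≤ 1 := by rw [hB]; split_ifs <;> norm_num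
    have h2' : M⁻¹ * (u p - u q) ≤ 1 := by
      have h2 : M⁻¹ * (u p - u q) ≤ M⁻¹ * M := mul_le_mul_of_nonneg_left hpq hMinv.le
      rwa [inv_mul_cancel₀ hMe.ne'] at h2
    rcases hs with h1 | h1
    · subst h1
      by_cases hqa : q = a
      · have hext' := hext p q hp hq (by simp [hqa])
        have h2 : 0 ≤ -(M⁻¹ * (u p - u q)) := by nlinarith
        linarith
      · have hB' : B = 0 := by
          rw [hB, if_neg]
          intro h; exact hqa h.symm
        linarith
    · subst h1
      by_cases hpa : p = a
      · have hext' := hext p q hp hq (by norm_num [hpa])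
        have h2 : 0 ≤ -(M⁻¹ * (u p - u q)) := by nlinarith
        linarith
      · have hA' : A = 0 := by
          rw [hA, if_neg]
          intro h; exact hpa h.symm
        linarith
  have := hhalf hbb
  have hLbb : L bb = s * bb a - 1 := by
    rw [hL]; dsimp only
    rw [hdotm, inv_mul_cancel₀ hMe.ne']
  have : -1 ≤ s * bb a - 1 := by rw [← hLbb]; exact this
  linarith

/-- at a global max of u = Dinv g, any element of NL is nonneg -/
lemma lap_nonneg_at_max (H : Hypergraph V) {u h : V → ℝ} (hh : h ∈ Lap H u)
    {a : V} (ha : ∀ p, u p ≤ u a) : 0 ≤ h a := by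
  obtain ⟨b, hb, rfl⟩ := lap_eq H hh
  rw [Finset.sum_apply]
  apply Finset.sum_nonneg
  intro e he
  simp only [Pi.smul_apply, smul_eq_mul]
  rcases eq_or_lt_of_le (Me_nonneg u (H.e_nonempty e he)) with hMe | hMe
  · rw [← hMe]; simp
  · have hbe := (hb e he)
    have hba : 0 ≤ (1:ℝ) * b e a := by
      apply bb_sign_at_ext u hbe.1 hbe.2 hMe (Or.inl rfl)
      intro p q _ _ hqa
      have hqa' : q = a := by simpa using hqa
      subst hqa'
      linarith [ha p]
    have hba' : 0 ≤ b e a := by linarith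
    have := H.w_pos e he
    positivity

lemma lap_nonpos_at_min (H : Hypergraph V) {u h : V → ℝ} (hh : h ∈ Lap H u)
    {a : V} (ha : ∀ p, u a ≤ u p) : h a ≤ 0 := by
  obtain ⟨b, hb, rfl⟩ := lap_eq H hh
  rw [Finset.sum_apply]
  apply Finset.sum_nonpos
  intro e he
  simp only [Pi.smul_apply, smul_eq_mul]
  rcases eq_or_lt_of_le (Me_nonneg u (H.e_nonempty e he)) with hMe | hMe
  · rw [← hMe]; simp
  · have hbe := (hb e he)
    have hba : 0 ≤ (-1:ℝ) * b e a := by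
      apply bb_sign_at_ext u hbe.1 hbe.2 hMe (Or.inr rfl)
      intro p q _ _ hpa
      norm_num at hpa
      subst hpa
      linarith [ha q]
    have hba' : b e a ≤ 0 := by linarith
    have hw := H.w_pos e he
    have hMe' := hMe.le
    have : 0 ≤ H.w e * Me u e := mul_nonneg hw.le hMe'
    nlinarith

/-- maximum principle : oscillation bound for the resolvent -/
lemma resolvent_osc [Nonempty V] (H : Hypergraph V) (hdeg : ∀ x : V, 0 < deg H x)
    {l : ℝ} (hl : 0 < l) (f : V → ℝ) (x y : V) :
    Dinv H (Resolvent H l f) x - Dinv H (Resolvent H l f) y ≤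
      (Finset.univ.sup' Finset.univ_nonempty (Dinv H f))
      - (Finset.univ.inf' Finset.univ_nonempty (Dinv H f)) := by
  obtain ⟨h, hh, heq⟩ := Resolvent_spec H hdeg hl f
  set g := Resolvent H l f with hg
  set u := Dinv H g with hu
  set v := Dinv H f with hv
  obtain ⟨amax, _, hamax⟩ := Finset.exists_mem_eq_sup' (Finset.univ_nonempty (α := V)) u
  obtain ⟨amin, _, hamin⟩ := Finset.exists_mem_eq_inf' (Finset.univ_nonempty (α := V)) u
  have hmax : ∀ p, u p ≤ u amax := by
    intro p
    rw [← hamax]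
    exact Finset.le_sup' u (Finset.mem_univ p)
  have hmin : ∀ p, u amin ≤ u p := by
    intro p
    rw [← hamin]
    exact Finset.inf'_le u (Finset.mem_univ p)
  have hpos := lap_nonneg_at_max H hh hmax
  have hneg := lap_nonpos_at_min H hh hmin
  have hvu : ∀ a : V, v a = u a + l * h a / deg H a := by
    intro a
    have := congrFun heq a
    simp only [Pi.add_apply, Pi.smul_apply, smul_eq_mul] at this
    rw [hv, hu]
    unfold Dinv
    rw [this]
    ring
  have h1 : u amax ≤ v amax := by
    rw [hvu amax]
    have := hdeg amax
    have : 0 ≤ l * h amax / deg H amax := by positivity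
    linarith
  have h2 : v amin ≤ u amin := by
    rw [hvu amin]
    have hd := hdeg amin
    have : l * h amin / deg H amin ≤ 0 := by
      apply div_nonpos_of_nonpos_of_nonneg _ hd.le
      exact mul_nonpos_of_nonneg_of_nonpos hl.le hneg
    linarith
  have h3 : v amax ≤ Finset.univ.sup' Finset.univ_nonempty v :=
    Finset.le_sup' v (Finset.mem_univ amax)
  have h4 : Finset.univ.inf' Finset.univ_nonempty v ≤ v amin :=
    Finset.inf'_le v (Finset.mem_univ amin)
  have h5 : u x ≤ u amax := hmax x
  have h6 : u amin ≤ u y := hmin y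
  linarith


lemma inn_delta_sub (H : Hypergraph V) (g : V → ℝ) (x y : V) :
    inn H g (delta x - delta y) = Dinv H g x - Dinv H g y := by
  unfold inn Dinv delta
  have : ∀ z : V, g z * ((if z = x then (1:ℝ) else 0) - (if z = y then 1 else 0)) / deg H z
      = (if z = x then g z / deg H z else 0) - (if z = y then g z / deg H z else 0) := by
    intro z; split_ifs <;> ring
  simp only [Pi.sub_apply]
  rw [Finset.sum_congr rfl (fun z _ => this z), Finset.sum_sub_distrib]
  simp

lemma gdist_nonneg (H : Hypergraph V) (x y : V) : 0 ≤ gdist H x y := Nat.cast_nonneg _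

lemma gdist_self (H : Hypergraph V) (x : V) : gdist H x x = 0 := by
  unfold gdist hdistN
  norm_cast
  apply Nat.sInf_eq_zero.2
  left
  exact ⟨fun _ => x, rfl, rfl, fun i hi => absurd hi (Nat.not_lt_zero i)⟩

lemma gdist_pos (H : Hypergraph V) (hconn : Connected H) {x y : V} (hxy : x ≠ y) :
    0 < gdist H x y := by
  unfold gdist
  have hne : {n | chainProp H x y n}.Nonempty := hconn x y
  have hmem := Nat.sInf_mem hne
  have : hdistN H x y ≠ 0 := by
    intro h0
    rw [hdistN] at h0
    rw [h0] at hmem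
    obtain ⟨z, hz0, hzn, _⟩ := hmem
    exact hxy (hz0 ▸ hzn ▸ rfl)
  have : 0 < hdistN H x y := Nat.pos_of_ne_zero this
  exact_mod_cast this

/-- uniform bound for distances -/
def Nbound (H : Hypergraph V) : ℝ :=
  (((Finset.univ : Finset (V × V)).sup fun p => hdistN H p.1 p.2 : ℕ) : ℝ)

lemma gdist_le_Nbound (H : Hypergraph V) (x y : V) : gdist H x y ≤ Nbound H := by
  unfold gdist Nbound
  exact_mod_cast Finset.le_sup (f := fun p : V × V => hdistN H p.1 p.2)
    (Finset.mem_univ (x, y))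

lemma inn_smul_left (H : Hypergraph V) (c : ℝ) (g d : V → ℝ) :
    inn H (c • g) d = c * inn H g d := by
  unfold inn
  rw [Finset.mul_sum]
  apply Finset.sum_congr rfl
  intro z _
  simp only [Pi.smul_apply, smul_eq_mul]
  ring

lemma zero_mem_Lip1 (H : Hypergraph V) : (0 : V → ℝ) ∈ Lip1 H := by
  intro x y
  have : inn H 0 (delta x - delta y) = 0 := by unfold inn; simp
  rw [this]
  exact gdist_nonneg H x y

lemma Resolvent_zero [Nonempty V] (H : Hypergraph V) (hdeg : ∀ x : V, 0 < deg H x)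
    {l : ℝ} (hl : 0 < l) : Resolvent H l (0 : V → ℝ) = 0 := by
  classical
  have hb : ∀ e : Finset V, ∃ be : V → ℝ, e.Nonempty → be ∈ Bp e := by
    intro e
    by_cases he : e.Nonempty
    · obtain ⟨a, ha⟩ := he
      refine ⟨delta a - delta a, fun _ => gen_mem_Bp ha ha⟩
    · exact ⟨0, fun h => absurd h he⟩
  choose b hbp using hb
  have hdinv0 : Dinv H (0 : V → ℝ) = 0 := by
    funext x; unfold Dinv; simp
  have hdot0 : ∀ b' : V → ℝ, dot b' (Dinv H (0:V→ℝ)) = 0 := by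
    intro b'; rw [hdinv0]; unfold dot; simp
  have hNL : (0 : V → ℝ) ∈ NL H (0 : V → ℝ) := by
    refine ⟨b, fun e he => ⟨hbp e (H.e_nonempty e he), fun b' _ => by rw [hdot0, hdot0]⟩, ?_⟩
    have : ∀ e ∈ H.E, (H.w e * dot (b e) (Dinv H (0:V→ℝ))) • b e = 0 := by
      intro e _
      rw [hdot0]
      simp
    rw [Finset.sum_congr rfl this]
    simp
  apply Resolvent_eq H hdeg hl hNL
  funext x; simp

section Main
variable [Nonempty V] (H : Hypergraph V)

lemma KD_bddAbove (hdeg : ∀ x : V, 0 < deg H x) {l : ℝ} (hl : 0 < l) (x y : V) :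
    BddAbove { r | ∃ f ∈ Lip1 H, r = inn H (Resolvent H l f) (delta x - delta y) } := by
  refine ⟨Nbound H, ?_⟩
  rintro r ⟨f, hf, rfl⟩
  rw [inn_delta_sub]
  have hosc := resolvent_osc H hdeg hl f x y
  obtain ⟨pmax, _, hpmax⟩ := Finset.exists_mem_eq_sup' (Finset.univ_nonempty (α := V)) (Dinv H f)
  obtain ⟨qmin, _, hqmin⟩ := Finset.exists_mem_eq_inf' (Finset.univ_nonempty (α := V)) (Dinv H f)
  have hlip : Dinv H f pmax - Dinv H f qmin ≤ gdist H pmax qmin := by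
    have := hf pmax qmin
    rwa [inn_delta_sub] at this
  have := gdist_le_Nbound H pmax qmin
  rw [hpmax, hqmin] at hosc
  linarith

lemma KD_nonneg (hdeg : ∀ x : V, 0 < deg H x) {l : ℝ} (hl : 0 < l) (x y : V) :
    0 ≤ KD H l x y := by
  apply le_csSup (KD_bddAbove H hdeg hl x y)
  refine ⟨0, zero_mem_Lip1 H, ?_⟩
  rw [Resolvent_zero H hdeg hl]
  unfold inn; simp

lemma le_KD (hdeg : ∀ x : V, 0 < deg H x) {l : ℝ} (hl : 0 < l) {f : V → ℝ}
    (hf : f ∈ Lip1 H) (x y : V) :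
    inn H (Resolvent H l f) (delta x - delta y) ≤ KD H l x y :=
  le_csSup (KD_bddAbove H hdeg hl x y) ⟨f, hf, rfl⟩

lemma kappaSet_finite (l : ℝ) :
    {r : ℝ | ∃ a b : V, a ≠ b ∧ r = kappa H l a b}.Finite := by
  apply Set.Finite.subset (Set.finite_range (fun p : V × V => kappa H l p.1 p.2))
  rintro r ⟨a, b, _, rfl⟩
  exact ⟨(a, b), rfl⟩

lemma kappaSet_nonempty (hV : 2 ≤ Fintype.card V) (l : ℝ) :
    {r : ℝ | ∃ a b : V, a ≠ b ∧ r = kappa H l a b}.Nonempty := by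
  have : Nontrivial V := Fintype.one_lt_card_iff_nontrivial.mp (by omega)
  obtain ⟨a, b, hab⟩ := exists_pair_ne V
  exact ⟨kappa H l a b, a, b, hab, rfl⟩

lemma contraction (hconn : Connected H) (hdeg : ∀ x : V, 0 < deg H x)
    (hV : 2 ≤ Fintype.card V) {l : ℝ} (hl : 0 < l) {f : V → ℝ} (hf : f ∈ Lip1 H)
    (x y : V) :
    inn H (Resolvent H l f) (delta x - delta y) ≤
      (1 - sInf {r : ℝ | ∃ a b : V, a ≠ b ∧ r = kappa H l a b}) * gdist H x y := by
  set C := 1 - sInf {r : ℝ | ∃ a b : V, a ≠ b ∧ r = kappa H l a b} with hC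
  by_cases hxy : x = y
  · subst hxy
    rw [inn_delta_sub, gdist_self]
    simp
  · have hd := gdist_pos H hconn hxy
    have h1 : inn H (Resolvent H l f) (delta x - delta y) ≤ KD H l x y :=
      le_KD H hdeg hl hf x y
    have h2 : sInf {r : ℝ | ∃ a b : V, a ≠ b ∧ r = kappa H l a b} ≤ kappa H l x y :=
      csInf_le (kappaSet_finite H l).bddBelow ⟨x, y, hxy, rfl⟩
    have h3 : KD H l x y = (1 - kappa H l x y) * gdist H x y := by
      rw [kappa]
      field_simp
      ring
    have h4 : (1 - kappa H l x y) ≤ C := by rw [hC]; linarith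
    calc inn H (Resolvent H l f) (delta x - delta y) ≤ KD H l x y := h1
      _ = (1 - kappa H l x y) * gdist H x y := h3
      _ ≤ C * gdist H x y := mul_le_mul_of_nonneg_right h4 hd.le

lemma C_nonneg (hconn : Connected H) (hdeg : ∀ x : V, 0 < deg H x)
    (hV : 2 ≤ Fintype.card V) {l : ℝ} (hl : 0 < l) :
    0 ≤ 1 - sInf {r : ℝ | ∃ a b : V, a ≠ b ∧ r = kappa H l a b} := by
  have : Nontrivial V := Fintype.one_lt_card_iff_nontrivial.mp (by omega)
  obtain ⟨a, b, hab⟩ := exists_pair_ne V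
  have hd := gdist_pos H hconn hab
  have h2 : sInf {r : ℝ | ∃ a b : V, a ≠ b ∧ r = kappa H l a b} ≤ kappa H l a b :=
    csInf_le (kappaSet_finite H l).bddBelow ⟨a, b, hab, rfl⟩
  have h3 : 0 ≤ KD H l a b := KD_nonneg H hdeg hl a b
  have h4 : kappa H l a b ≤ 1 := by
    rw [kappa]
    have : 0 ≤ KD H l a b / gdist H a b := div_nonneg h3 hd.le
    linarith
  linarith


end Main

/-- discrete gradient estimate: with `κ_λ := min_{x≠y} κ_λ(x,y)`,
for every weighted 1-Lipschitz `f`, every `n` and all `x, y`,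
`⟨J_λ^n f, δ_x − δ_y⟩ ≤ (1 − κ_λ)^n d(x,y)`. -/
theorem stmt17 [Nonempty V] (H : Hypergraph V) (hconn : Connected H)
    (hdeg : ∀ x : V, 0 < deg H x) (hV : 2 ≤ Fintype.card V)
    (l : ℝ) (hl : 0 < l) (f : V → ℝ) (hf : f ∈ Lip1 H) (n : ℕ) (x y : V) :
    inn H ((Resolvent H l)^[n] f) (delta x - delta y) ≤
      (1 - sInf {r : ℝ | ∃ a b : V, a ≠ b ∧ r = kappa H l a b}) ^ n * gdist H x y := by
  set C := 1 - sInf {r : ℝ | ∃ a b : V, a ≠ b ∧ r = kappa H l a b} with hC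
  have hC0 : 0 ≤ C := C_nonneg H hconn hdeg hV hl
  suffices h : ∀ m : ℕ, ∀ a b : V,
      inn H ((Resolvent H l)^[m] f) (delta a - delta b) ≤ C ^ m * gdist H a b from h n x y
  intro m
  induction m with
  | zero =>
      intro a b
      simpa using hf a b
  | succ m ih =>
      intro a b
      rw [Function.iterate_succ_apply']
      set g := (Resolvent H l)^[m] f with hg
      rcases eq_or_lt_of_le hC0 with hC0' | hCpos
      · have hCz : C = 0 := hC0'.symm
        have hgL : g ∈ Lip1 H := by
          intro p q
          have hle1 : C ^ m ≤ 1 := by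
            rw [hCz]
            cases m with
            | zero => norm_num
            | succ k => simp [pow_succ]
          calc inn H g (delta p - delta q) ≤ C ^ m * gdist H p q := ih p q
            _ ≤ 1 * gdist H p q :=
                mul_le_mul_of_nonneg_right hle1 (gdist_nonneg H p q)
            _ = gdist H p q := one_mul _
        have hcon := contraction H hconn hdeg hV hl hgL a b
        rw [← hC] at hcon
        rw [hCz] at hcon ⊢
        rw [zero_pow (Nat.succ_ne_zero m)]
        rw [zero_mul] at hcon ⊢
        exact hcon
      · have hCn : 0 < C ^ m := pow_pos hCpos m
        have hgL : (C ^ m)⁻¹ • g ∈ Lip1 H := by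
          intro p q
          rw [inn_smul_left]
          calc (C ^ m)⁻¹ * inn H g (delta p - delta q)
              ≤ (C ^ m)⁻¹ * (C ^ m * gdist H p q) :=
                mul_le_mul_of_nonneg_left (ih p q) (inv_nonneg.2 hCn.le)
            _ = gdist H p q := by
                rw [← mul_assoc, inv_mul_cancel₀ hCn.ne', one_mul]
        have hcon := contraction H hconn hdeg hV hl hgL a b
        rw [← hC] at hcon
        have hres : Resolvent H l g = (C ^ m) • Resolvent H l ((C ^ m)⁻¹ • g) := by
          have hgg : g = (C ^ m) • ((C ^ m)⁻¹ • g) := by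
            rw [smul_smul, mul_inv_cancel₀ hCn.ne', one_smul]
          conv_lhs => rw [hgg]
          exact Resolvent_smul H hdeg hl hCn ((C ^ m)⁻¹ • g)
        rw [hres, inn_smul_left]
        calc C ^ m * inn H (Resolvent H l ((C ^ m)⁻¹ • g)) (delta a - delta b)
            ≤ C ^ m * (C * gdist H a b) := mul_le_mul_of_nonneg_left hcon hCn.le
          _ = C ^ (m + 1) * gdist H a b := by ring


end HypRicci
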